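/- Let a, b ∈ ℝ with b² < a². Then there exist m, n ∈ ℝ such that the function F = G3 + m·C1 + n·C2 : ℝ^6 → ℝ has vanishing derivative at the equilibrium e = (a, 0, 0, b, 0, 0), and the Hessian quadratic form of F at e is positive definite on the subspace W = {v ∈ ℝ^6 : dC1(e)(v) = 0 and dC2(e)(v) = 0}, i.e., d²F(e)(v,v) > 0 for every nonzero v ∈ W. (Hence F is a Lyapunov function proving the nonlinear stability of e.) -/

import Mathlib

set_option synthInstance.maxHeartbeats 1000000
set_option maxHeartbeats 1000000

noncomputable section

/-- Casimir `C1`. -/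
def C1fun (p : Fin 6 → ℝ) : ℝ :=
  (p 0 ^ 2 + p 1 ^ 2 + p 2 ^ 2 + p 3 ^ 2 + p 4 ^ 2 + p 5 ^ 2) / 2

/-- Casimir `C2`. -/
def C2fun (p : Fin 6 → ℝ) : ℝ := p 0 * p 3 + p 1 * p 4 + p 2 * p 5

/-- The constant of motion `G3`. -/
def G3fun (l1 l2 l3 l4 : ℝ) (p : Fin 6 → ℝ) : ℝ :=
  p 0 ^ 2 / (l3^2 - l2^2) + p 1 ^ 2 / (l3^2 - l1^2) + p 5 ^ 2 / (l3^2 - l4^2)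

abbrev E6 := Fin 6 → ℝ

@[simp] lemma vec6_at4 (a b : ℝ) : (![a, 0, 0, b, 0, 0] : E6) 4 = 0 := rfl
@[simp] lemma vec6_at5 (a b : ℝ) : (![a, 0, 0, b, 0, 0] : E6) 5 = 0 := rfl

def pr6 (i : Fin 6) : E6 →L[ℝ] ℝ := ContinuousLinearMap.proj i

def PP (i j : Fin 6) : E6 →L[ℝ] E6 →L[ℝ] ℝ := (pr6 i).smulRight (pr6 j)

@[simp] lemma PP_apply (i j : Fin 6) (p q : E6) : PP i j p q = p i * q j := by
  simp [PP, pr6, smul_eq_mul]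

lemma quad_hasFDerivAt (G : E6 →L[ℝ] E6 →L[ℝ] ℝ) (x : E6) :
    HasFDerivAt (fun p => G p p) (G x + G.flip x) x := by
  have h := (G.isBoundedBilinearMap).hasFDerivAt (x, x)
  have hd : HasFDerivAt (fun p : E6 => (p, p))
      ((ContinuousLinearMap.id ℝ E6).prod (ContinuousLinearMap.id ℝ E6)) x :=
    ((ContinuousLinearMap.id ℝ E6).prod (ContinuousLinearMap.id ℝ E6)).hasFDerivAt
  have h2 : HasFDerivAt (fun p : E6 => G p p)
      (((G.isBoundedBilinearMap).deriv (x, x)).comp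
        ((ContinuousLinearMap.id ℝ E6).prod (ContinuousLinearMap.id ℝ E6))) x :=
    HasFDerivAt.comp (f := fun p : E6 => (p, p)) x h hd
  convert h2 using 1
  all_goals rfl

lemma quad_fderiv (G : E6 →L[ℝ] E6 →L[ℝ] ℝ) :
    fderiv ℝ (fun p => G p p) = fun x => G x + G.flip x :=
  funext fun x => (quad_hasFDerivAt G x).fderiv

lemma quad_fderiv2 (G : E6 →L[ℝ] E6 →L[ℝ] ℝ) (x : E6) :
    fderiv ℝ (fderiv ℝ (fun p => G p p)) x = G + G.flip := by
  rw [quad_fderiv G]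
  have h : (fun x => G x + G.flip x) = ⇑(G + G.flip) := by
    funext y; simp
  rw [h, ContinuousLinearMap.fderiv]

def GC1 : E6 →L[ℝ] E6 →L[ℝ] ℝ :=
  (1/2 : ℝ) • (PP 0 0 + PP 1 1 + PP 2 2 + PP 3 3 + PP 4 4 + PP 5 5)

def GC2 : E6 →L[ℝ] E6 →L[ℝ] ℝ :=
  (1/2 : ℝ) • (PP 0 3 + PP 3 0 + PP 1 4 + PP 4 1 + PP 2 5 + PP 5 2)

lemma C1eq : C1fun = fun p => GC1 p p := by
  funext p
  simp [C1fun, GC1, smul_eq_mul]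
  ring

lemma C2eq : C2fun = fun p => GC2 p p := by
  funext p
  simp [C2fun, GC2, smul_eq_mul]
  ring

lemma fderiv_C1 (a b : ℝ) (v : E6) :
    fderiv ℝ C1fun ![a, 0, 0, b, 0, 0] v = a * v 0 + b * v 3 := by
  rw [C1eq, quad_fderiv]
  simp [GC1, smul_eq_mul]
  ring

lemma fderiv_C2 (a b : ℝ) (v : E6) :
    fderiv ℝ C2fun ![a, 0, 0, b, 0, 0] v = b * v 0 + a * v 3 := by
  rw [C2eq, quad_fderiv]
  simp [GC2, smul_eq_mul]
  ring

/-- The full quadratic form for `G3 + m C1 + n C2`. -/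
def GF (l1 l2 l3 l4 m n : ℝ) : E6 →L[ℝ] E6 →L[ℝ] ℝ :=
  (1 / (l3^2 - l2^2)) • PP 0 0 + (1 / (l3^2 - l1^2)) • PP 1 1 +
    (1 / (l3^2 - l4^2)) • PP 5 5 + m • GC1 + (n/2) • (PP 0 3 + PP 3 0 + PP 1 4 + PP 4 1 + PP 2 5 + PP 5 2)

lemma Feq (l1 l2 l3 l4 m n : ℝ) :
    (fun p => G3fun l1 l2 l3 l4 p + m * C1fun p + n * C2fun p)
      = fun p => GF l1 l2 l3 l4 m n p p := by
  funext p
  simp [G3fun, C1fun, C2fun, GF, GC1, smul_eq_mul]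
  ring

/-- `G3 + m C1 + n C2` is a Lyapunov function for the equilibrium
`(a,0,0,b,0,0)`: its derivative vanishes there, and its Hessian is positive definite
on `W = ker dC1(e) ∩ ker dC2(e)`. -/
theorem G3_lyapunov_function
    (l1 l2 l3 l4 : ℝ) (h12 : l2 < l1) (h23 : l3 < l2) (h34 : l4 < l3)
    (s12 : 0 < l1 + l2) (s13 : 0 < l1 + l3) (s14 : 0 < l1 + l4)
    (s23 : 0 < l2 + l3) (s24 : 0 < l2 + l4) (s34 : 0 < l3 + l4)
    (a b : ℝ) (hba : b ^ 2 < a ^ 2) :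
    ∃ m n : ℝ,
      fderiv ℝ (fun p => G3fun l1 l2 l3 l4 p + m * C1fun p + n * C2fun p)
          ![a, 0, 0, b, 0, 0] = 0 ∧
      ∀ v : Fin 6 → ℝ, v ≠ 0 →
        fderiv ℝ C1fun ![a, 0, 0, b, 0, 0] v = 0 →
        fderiv ℝ C2fun ![a, 0, 0, b, 0, 0] v = 0 →
        0 < fderiv ℝ (fderiv ℝ (fun p => G3fun l1 l2 l3 l4 p + m * C1fun p + n * C2fun p))
              ![a, 0, 0, b, 0, 0] v v := by
  have hc2 : 0 < l2^2 - l3^2 := by nlinarith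
  have hc1 : 0 < l1^2 - l3^2 := by nlinarith
  have hc12 : l2^2 - l3^2 < l1^2 - l3^2 := by nlinarith
  have hc5 : 0 < l3^2 - l4^2 := by nlinarith
  have hD : 0 < a^2 - b^2 := by nlinarith
  have ha2 : 0 < a^2 := by nlinarith [sq_nonneg b]
  have hc2' : l3^2 - l2^2 ≠ 0 := by nlinarith
  have hD' : a^2 - b^2 ≠ 0 := ne_of_gt hD
  obtain ⟨m, hm_def⟩ : ∃ m : ℝ, m = 2*a^2 / ((l2^2 - l3^2)*(a^2 - b^2)) := ⟨_, rfl⟩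
  obtain ⟨n, hn_def⟩ : ∃ n : ℝ, n = -(2*a*b) / ((l2^2 - l3^2)*(a^2 - b^2)) := ⟨_, rfl⟩
  refine ⟨m, n, ?_, ?_⟩
  · rw [Feq, quad_fderiv]
    show GF l1 l2 l3 l4 m n ![a,0,0,b,0,0] + (GF l1 l2 l3 l4 m n).flip ![a,0,0,b,0,0] = 0
    ext v
    simp [GF, GC1, smul_eq_mul, hm_def, hn_def]
    field_simp
    ring
  · intro v hv h1 h2
    rw [fderiv_C1] at h1
    rw [fderiv_C2] at h2
    have hv0 : v 0 = 0 := by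
      have h3 : (a^2 - b^2) * v 0 = 0 := by linear_combination a*h1 - b*h2
      exact by
        rcases mul_eq_zero.mp h3 with h | h
        · exact absurd h hD'
        · exact h
    have hv3 : v 3 = 0 := by
      have h3 : (a^2 - b^2) * v 3 = 0 := by linear_combination a*h2 - b*h1
      rcases mul_eq_zero.mp h3 with h | h
      · exact absurd h hD'
      · exact h
    rw [Feq, quad_fderiv2]
    obtain ⟨A1, hA1⟩ : ∃ A1 : ℝ, A1 = (l3^2 - l1^2)⁻¹ := ⟨_, rfl⟩
    obtain ⟨A5, hA5⟩ : ∃ A5 : ℝ, A5 = (l3^2 - l4^2)⁻¹ := ⟨_, rfl⟩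
    have hXeq : (GF l1 l2 l3 l4 m n + (GF l1 l2 l3 l4 m n).flip) v v
        = (2*A1 + m)*(v 1)^2 + m*(v 2)^2 + m*(v 4)^2 + (2*A5 + m)*(v 5)^2
          + 2*n*(v 1 * v 4 + v 2 * v 5) := by
      rw [hA1, hA5]
      simp [GF, GC1, smul_eq_mul, hv0, hv3]
      ring
    rw [hXeq]
    have hm : 0 < m := by
      rw [hm_def]
      exact div_pos (by positivity) (mul_pos hc2 hD)
    have hc1' : l1^2 - l3^2 ≠ 0 := ne_of_gt hc1
    have hc5' : l3^2 - l4^2 ≠ 0 := ne_of_gt hc5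
    have hc1'' : l3^2 - l1^2 ≠ 0 := by intro h; exact hc1' (by linarith)
    have hc2'' : l2^2 - l3^2 ≠ 0 := ne_of_gt hc2
    have ek1 : m * (m + 2*A1) - n^2
        = (4*a^2*((l1^2 - l3^2) - (l2^2 - l3^2)))
          / ((l1^2 - l3^2) * (l2^2 - l3^2)^2 * (a^2 - b^2)) := by
      rw [hA1, hm_def, hn_def]
      field_simp
      ring
    have hk1 : 0 < m * (m + 2*A1) - n^2 := by
      rw [ek1]
      apply div_pos
      · nlinarith
      · positivity
    have ek2 : m * (m + 2*A5) - n^2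
        = (4*a^2*((l3^2 - l4^2) + (l2^2 - l3^2)))
          / ((l3^2 - l4^2) * (l2^2 - l3^2)^2 * (a^2 - b^2)) := by
      rw [hA5, hm_def, hn_def]
      field_simp
      ring
    have hk2 : 0 < m * (m + 2*A5) - n^2 := by
      rw [ek2]
      apply div_pos
      · nlinarith
      · positivity
    have key : (2*A1 + m)*(v 1)^2 + m*(v 2)^2 + m*(v 4)^2 + (2*A5 + m)*(v 5)^2
          + 2*n*(v 1 * v 4 + v 2 * v 5)
        = ((m*v 4 + n*v 1)^2 + (m*v 2 + n*v 5)^2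
            + (m * (m + 2*A1) - n^2)*(v 1)^2 + (m * (m + 2*A5) - n^2)*(v 5)^2) / m := by
      field_simp
      ring
    rw [key]
    apply div_pos ?_ hm
    have hS1 := sq_nonneg (m * v 4 + n * v 1)
    have hS2 := sq_nonneg (m * v 2 + n * v 5)
    have hK1 := mul_nonneg hk1.le (sq_nonneg (v 1))
    have hK2 := mul_nonneg hk2.le (sq_nonneg (v 5))
    rcases eq_or_ne (v 1) 0 with e1 | e1
    · rcases eq_or_ne (v 5) 0 with e5 | e5
      · rcases eq_or_ne (v 4) 0 with e4 | e4
        · have e2 : v 2 ≠ 0 := by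
            intro h
            apply hv
            funext i
            fin_cases i <;> simp [hv0, hv3, e1, e5, e4, h]
          have p2 : 0 < (m * v 2 + n * v 5)^2 := by
            apply sq_pos_of_ne_zero
            rw [e5]
            simpa using mul_ne_zero hm.ne' e2
          linarith [hS1, hK1, hK2, p2]
        · have p4 : 0 < (m * v 4 + n * v 1)^2 := by
            apply sq_pos_of_ne_zero
            rw [e1]
            simpa using mul_ne_zero hm.ne' e4
          linarith [hS2, hK1, hK2, p4]
      · have p5 : 0 < (m * (m + 2*A5) - n^2) * (v 5)^2 :=
          mul_pos hk2 (pow_pos (abs_pos.mpr e5) 2 |>.trans_eq (by rw [sq_abs]))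
        linarith [hS1, hS2, hK1, p5]
    · have p1 : 0 < (m * (m + 2*A1) - n^2) * (v 1)^2 :=
        mul_pos hk1 (pow_pos (abs_pos.mpr e1) 2 |>.trans_eq (by rw [sq_abs]))
      linarith [hS1, hS2, hK2, p1]
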